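/- (Rototranslational injectivity; core of Proposition 2.) Let n ≥ 1, let x_1,…,x_n ∈ ℝ³ with centroid x̄ = (1/n) Σ_i x_i, and suppose there exist indices i, j such that x_i − x̄ and x_j − x̄ are linearly independent. Let R₁, R₂ be 3×3 real special orthogonal matrices and t₁, t₂ ∈ ℝ³. If R₁(x_i − x̄) + x̄ + t₁ = R₂(x_i − x̄) + x̄ + t₂ for every i = 1,…,n, then R₁ = R₂ and t₁ = t₂. -/

import Mathlib

open scoped BigOperators Matrix

def cross3 (u v : Fin 3 → ℝ) : Fin 3 → ℝ :=
  ![u 1 * v 2 - u 2 * v 1, u 2 * v 0 - u 0 * v 2, u 0 * v 1 - u 1 * v 0]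

lemma cross3_eq_crossProduct (u v : Fin 3 → ℝ) : cross3 u v = crossProduct u v := rfl

/-- Polynomial identity: cross product of images under a matrix. -/
lemma cross3_mulVec (M : Matrix (Fin 3) (Fin 3) ℝ) (u v : Fin 3 → ℝ) :
    cross3 (M.mulVec u) (M.mulVec v) = (M.adjugate)ᵀ.mulVec (cross3 u v) := by
  funext k
  fin_cases k <;>
    simp [cross3, Matrix.mulVec, dotProduct, Fin.sum_univ_three,
      Matrix.adjugate_fin_three, Matrix.transpose_apply] <;> ring

lemma adjugate_of_so3 (R : Matrix (Fin 3) (Fin 3) ℝ)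
    (hR : Rᵀ * R = 1) (hdet : R.det = 1) : R.adjugate = Rᵀ := by
  have hcomm : R * Rᵀ = 1 := mul_eq_one_comm.mpr hR
  calc R.adjugate = R.adjugate * (R * Rᵀ) := by rw [hcomm, mul_one]
    _ = (R.adjugate * R) * Rᵀ := by rw [mul_assoc]
    _ = Rᵀ := by rw [Matrix.adjugate_mul, hdet, one_smul, one_mul]

lemma so3_cross (R : Matrix (Fin 3) (Fin 3) ℝ)
    (hR : Rᵀ * R = 1) (hdet : R.det = 1) (u v : Fin 3 → ℝ) :
    cross3 (R.mulVec u) (R.mulVec v) = R.mulVec (cross3 u v) := by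
  rw [cross3_mulVec, adjugate_of_so3 R hR hdet, Matrix.transpose_transpose]

theorem stmt_10 (n : ℕ) (hn : 1 ≤ n) (x : Fin n → Fin 3 → ℝ)
    (xbar : Fin 3 → ℝ) (hxbar : xbar = ((1 : ℝ) / n) • ∑ i, x i)
    (hindep : ∃ i j : Fin n, LinearIndependent ℝ ![x i - xbar, x j - xbar])
    (R₁ R₂ : Matrix (Fin 3) (Fin 3) ℝ)
    (hR₁ : R₁ᵀ * R₁ = 1) (hdet₁ : R₁.det = 1)
    (hR₂ : R₂ᵀ * R₂ = 1) (hdet₂ : R₂.det = 1)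
    (t₁ t₂ : Fin 3 → ℝ)
    (h : ∀ i, R₁.mulVec (x i - xbar) + xbar + t₁ = R₂.mulVec (x i - xbar) + xbar + t₂) :
    R₁ = R₂ ∧ t₁ = t₂ := by
  have hn0 : (n : ℝ) ≠ 0 := by positivity
  -- the centered coordinates sum to zero
  have hsum0 : ∑ i, (x i - xbar) = 0 := by
    have : ∑ i : Fin n, (x i - xbar) = (∑ i, x i) - (n : ℝ) • xbar := by
      rw [Finset.sum_sub_distrib, Finset.sum_const, Finset.card_univ, Fintype.card_fin]
      congr 1
      exact (Nat.cast_smul_eq_nsmul ℝ n xbar).symm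
    rw [this, hxbar, smul_smul]
    field_simp
    rw [one_smul, sub_self]
  -- cancel xbar in h
  have key : ∀ i, R₁.mulVec (x i - xbar) + t₁ = R₂.mulVec (x i - xbar) + t₂ := by
    intro i
    have h' := h i
    rw [add_right_comm _ xbar t₁, add_right_comm _ xbar t₂] at h'
    exact add_right_cancel h'
  -- derive t₁ = t₂ by summing
  have hmv : ∀ (R : Matrix (Fin 3) (Fin 3) ℝ),
      ∑ i, R.mulVec (x i - xbar) = 0 := by
    intro R
    have : ∑ i, R.mulVec (x i - xbar) = R.mulVec (∑ i, (x i - xbar)) := by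
      simp_rw [← Matrix.mulVecLin_apply]
      exact (map_sum R.mulVecLin _ _).symm
    rw [this, hsum0, Matrix.mulVec_zero]
  have ht : t₁ = t₂ := by
    have hs : ∑ i, (R₁.mulVec (x i - xbar) + t₁) = ∑ i, (R₂.mulVec (x i - xbar) + t₂) :=
      Finset.sum_congr rfl (fun i _ => key i)
    rw [Finset.sum_add_distrib, Finset.sum_add_distrib, hmv R₁, hmv R₂, zero_add, zero_add,
      Finset.sum_const, Finset.sum_const, Finset.card_univ, Fintype.card_fin] at hs
    have hs' : (n : ℝ) • t₁ = (n : ℝ) • t₂ := by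
      rw [← Nat.cast_smul_eq_nsmul ℝ n t₁, ← Nat.cast_smul_eq_nsmul ℝ n t₂] at hs
      exact hs
    exact smul_right_injective _ hn0 hs'
  refine ⟨?_, ht⟩
  -- now R₁ and R₂ agree on centered coordinates
  have key' : ∀ i, R₁.mulVec (x i - xbar) = R₂.mulVec (x i - xbar) := by
    intro i
    have := key i
    rw [ht] at this
    exact add_right_cancel this
  obtain ⟨i, j, hij⟩ := hindep
  set u := x i - xbar with hu
  set v := x j - xbar with hv
  set c := cross3 u v with hc
  have hcne : c ≠ 0 := by
    rw [hc, cross3_eq_crossProduct]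
    exact crossProduct_ne_zero_iff_linearIndependent.mpr hij
  have hRc : R₁.mulVec c = R₂.mulVec c := by
    rw [hc, ← so3_cross R₁ hR₁ hdet₁, ← so3_cross R₂ hR₂ hdet₂, key' i, key' j]
  -- determinant of the matrix with rows u, v, c is ‖c‖² ≠ 0
  have hdet : Matrix.det ![u, v, c] ≠ 0 := by
    have h1 : u ⬝ᵥ (crossProduct v c) = Matrix.det ![u, v, c] := triple_product_eq_det u v c
    have h2 : u ⬝ᵥ (crossProduct v c) = c ⬝ᵥ c := by
      rw [triple_product_permutation, triple_product_permutation]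
      rw [hc, cross3_eq_crossProduct]
    rw [← h1, h2]
    exact fun hz => hcne (dotProduct_self_eq_zero.mp hz)
  set A : Matrix (Fin 3) (Fin 3) ℝ := (Matrix.of ![u, v, c])ᵀ with hA
  have hAdet : IsUnit A.det := by
    rw [hA, Matrix.det_transpose]
    exact isUnit_iff_ne_zero.mpr hdet
  have hmulA : R₁ * A = R₂ * A := by
    have hcols : ∀ l : Fin 3, R₁.mulVec (![u, v, c] l) = R₂.mulVec (![u, v, c] l) := by
      intro l
      fin_cases l
      · exact key' i
      · exact key' j
      · exact hRc
    ext k l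
    have hkl := congrFun (hcols l) k
    simp only [Matrix.mulVec, dotProduct] at hkl
    simp only [hA, Matrix.mul_apply, Matrix.transpose_apply, Matrix.of_apply]
    exact hkl
  calc R₁ = R₁ * A * A⁻¹ := by rw [Matrix.mul_assoc, Matrix.mul_nonsing_inv A hAdet, mul_one]
    _ = R₂ * A * A⁻¹ := by rw [hmulA]
    _ = R₂ := by rw [Matrix.mul_assoc, Matrix.mul_nonsing_inv A hAdet, mul_one]
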